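/- Let q be a prime power and suppose U_1, ..., U_{q+1} are subsets of ℙ²(F_q) whose union is all of ℙ²(F_q) and which satisfy U_i ∩ U_j = B for all i ≠ j, where B = ∩_{k=1}^{q+1} U_k. Then there exist homogeneous polynomials F, G ∈ F_q[x,y,z] of the same degree and an enumeration C_1, ..., C_{q+1} of the F_q-members of the pencil generated by F and G (i.e., of the sets {[v] ∈ ℙ²(F_q) : sF(v)+tG(v)=0} for [s:t] ∈ ℙ¹(F_q)) such that C_i(F_q) = U_i for each 1 ≤ i ≤ q+1. -/
import Mathlib


open MvPolynomial

/-- The `F_q`-line in `ℙ²(F_q)` with (dual) coefficient vector `a`. -/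
def projLine (F : Type*) [Field F] (a : Fin 3 → F) :
    Set (Projectivization F (Fin 3 → F)) :=
  {P | ∑ i, a i * P.rep i = 0}

/-- A set of points of `ℙ²(F_q)` is a blocking set if it meets every `F_q`-line. -/
def IsBlockingSet (F : Type*) [Field F] (B : Set (Projectivization F (Fin 3 → F))) : Prop :=
  ∀ a : Fin 3 → F, a ≠ 0 → (B ∩ projLine F a).Nonempty

/-- The set of `F_q`-points of the member of the pencil `⟨P₁, P₂⟩` at `[s:t] ∈ ℙ¹(F_q)`. -/
def pencilMember (F : Type*) [Field F] (P₁ P₂ : MvPolynomial (Fin 3) F)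
    (st : Projectivization F (Fin 2 → F)) :
    Set (Projectivization F (Fin 3 → F)) :=
  {P | st.rep 0 * eval P.rep P₁ + st.rep 1 * eval P.rep P₂ = 0}

section AuxLemmas

variable {F : Type*} [Field F]

/-- Dual separation: if `v` is not a scalar multiple of `w`, there is a linear form
vanishing at `w` but not at `v`. -/
lemma aux_dual_sep {n : ℕ} (v w : Fin n → F) (h : ¬ ∃ c : F, c • w = v) :
    ∃ a : Fin n → F, (∑ i, a i * w i = 0) ∧ (∑ i, a i * v i ≠ 0) := by
  have hvs : v ∉ Submodule.span F {w} := by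
    rw [Submodule.mem_span_singleton]; exact h
  obtain ⟨f, hfv, hmap⟩ := Submodule.exists_dual_map_eq_bot_of_notMem hvs inferInstance
  have key : ∀ u : Fin n → F, ∑ i, f (Pi.single i 1) * u i = f u := by
    intro u
    conv_rhs => rw [← Finset.univ_sum_single u]
    rw [map_sum]
    refine Finset.sum_congr rfl fun i _ => ?_
    have hs : Pi.single i (u i) = u i • (Pi.single i 1 : Fin n → F) := by
      funext j
      simp [Pi.single_apply, mul_ite]
    rw [hs, map_smul, smul_eq_mul, mul_comm]
  refine ⟨fun i => f (Pi.single i 1), ?_, ?_⟩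
  · rw [key]
    have hw : f w ∈ (Submodule.span F {w}).map f :=
      Submodule.mem_map_of_mem (Submodule.mem_span_singleton_self w)
    rw [hmap] at hw
    simpa using hw
  · rw [key]; exact hfv

lemma aux_vec2 {v : Fin 2 → F} (hv : v ≠ 0) (h : v 0 = 0) : v 1 ≠ 0 := by
  intro h1
  apply hv
  funext i
  fin_cases i <;> simp_all

lemma aux_smul2 {c : F} {v w : Fin 2 → F} (h0 : c * w 0 = v 0) (h1 : c * w 1 = v 1) :
    c • w = v := by
  funext i
  fin_cases i <;> simp only [Pi.smul_apply, smul_eq_mul] <;> simp_all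

/-- Determinant criterion for equality in `ℙ¹`. -/
lemma aux_det (P Q : Projectivization F (Fin 2 → F)) :
    P.rep 0 * Q.rep 1 - P.rep 1 * Q.rep 0 = 0 ↔ P = Q := by
  constructor
  · intro hdet
    have hP := P.rep_nonzero
    have hQ := Q.rep_nonzero
    have hd : P.rep 0 * Q.rep 1 = P.rep 1 * Q.rep 0 := sub_eq_zero.1 hdet
    have hc : ∃ c : F, c • Q.rep = P.rep := by
      by_cases h0 : Q.rep 0 = 0
      · have h1 : Q.rep 1 ≠ 0 := aux_vec2 hQ h0
        have hP0 : P.rep 0 = 0 := by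
          have h' : P.rep 0 * Q.rep 1 = 0 := by rw [hd, h0, mul_zero]
          exact (mul_eq_zero.1 h').resolve_right h1
        exact ⟨P.rep 1 / Q.rep 1, aux_smul2 (by rw [h0, mul_zero, hP0])
          (div_mul_cancel₀ _ h1)⟩
      · refine ⟨P.rep 0 / Q.rep 0, aux_smul2 (div_mul_cancel₀ _ h0) ?_⟩
        field_simp
        linear_combination hd
    obtain ⟨c, hc⟩ := hc
    have hmk : Projectivization.mk F P.rep hP = Projectivization.mk F Q.rep hQ :=
      (Projectivization.mk_eq_mk_iff' F _ _ hP hQ).2 ⟨c, hc⟩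
    rwa [Projectivization.mk_rep, Projectivization.mk_rep] at hmk
  · rintro rfl; ring

/-- The cardinality of `ℙ¹(F)`. -/
lemma aux_cardP1 [Fintype F] :
    Nat.card (Projectivization F (Fin 2 → F)) = Fintype.card F + 1 := by
  classical
  have h10 : (![1, 0] : Fin 2 → F) ≠ 0 := fun h => by simpa using congrFun h 0
  have hx1 : ∀ x : F, (![x, 1] : Fin 2 → F) ≠ 0 := fun x h => by simpa using congrFun h 1
  let f : Option F → Projectivization F (Fin 2 → F) := fun o =>
    match o with
    | none => Projectivization.mk F ![1, 0] h10
    | some x => Projectivization.mk F ![x, 1] (hx1 x)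
  have hbij : Function.Bijective f := by
    constructor
    · rintro (_ | x) (_ | y) h
      · rfl
      · exfalso
        obtain ⟨c, hc⟩ := (Projectivization.mk_eq_mk_iff' F _ _ (hx1 y) h10).1 h.symm
        have h1 := congrFun hc 1
        have h0 := congrFun hc 0
        simp at h1 h0
      · exfalso
        obtain ⟨c, hc⟩ := (Projectivization.mk_eq_mk_iff' F _ _ (hx1 x) h10).1 h
        have h1 := congrFun hc 1
        have h0 := congrFun hc 0
        simp at h1 h0
      · obtain ⟨c, hc⟩ := (Projectivization.mk_eq_mk_iff' F _ _ (hx1 x) (hx1 y)).1 h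
        have h1 := congrFun hc 1
        have h0 := congrFun hc 0
        simp at h1 h0
        rw [h1, one_mul] at h0
        rw [h0]
    · intro Q
      have hQ := Q.rep_nonzero
      by_cases h1 : Q.rep 1 = 0
      · refine ⟨none, ?_⟩
        have h0 : Q.rep 0 ≠ 0 := by
          intro h0; apply hQ; funext i; fin_cases i <;> simp_all
        have hmk : Projectivization.mk F ![1, 0] h10
            = Projectivization.mk F Q.rep hQ := by
          refine (Projectivization.mk_eq_mk_iff' F _ _ _ _).2 ⟨(Q.rep 0)⁻¹, ?_⟩
          funext i; fin_cases i <;>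
            simp_all [inv_mul_cancel₀ h0]
        simpa [f, Projectivization.mk_rep] using hmk
      · refine ⟨some (Q.rep 0 / Q.rep 1), ?_⟩
        have hmk : Projectivization.mk F ![Q.rep 0 / Q.rep 1, 1] (hx1 _)
            = Projectivization.mk F Q.rep hQ := by
          refine (Projectivization.mk_eq_mk_iff' F _ _ _ _).2 ⟨(Q.rep 1)⁻¹, ?_⟩
          funext i; fin_cases i <;>
            simp_all [inv_mul_cancel₀ h1, div_eq_inv_mul]
        simpa [f, Projectivization.mk_rep] using hmk
  rw [← Nat.card_eq_of_bijective f hbij]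
  simp [Nat.card_eq_fintype_card]

end AuxLemmas

/-- **Remark 2.5 (generalized realization).** If `U_1, …, U_{q+1}` cover `ℙ²(F_q)` and any two
of them intersect exactly in `B = ∩ U_k`, then there is a pencil whose `F_q`-members have
point sets exactly `U_1, …, U_{q+1}`. -/
theorem stmt_16 (F : Type*) [Field F] [Fintype F]
    (U : Fin (Fintype.card F + 1) → Set (Projectivization F (Fin 3 → F)))
    (hcover : (⋃ i, U i) = Set.univ)
    (hinter : ∀ i j, i ≠ j → U i ∩ U j = ⋂ k, U k) :
    ∃ (d : ℕ) (P₁ P₂ : MvPolynomial (Fin 3) F)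
      (e : Fin (Fintype.card F + 1) ≃ Projectivization F (Fin 2 → F)),
      P₁.IsHomogeneous d ∧ P₂.IsHomogeneous d ∧
      ∀ i, pencilMember F P₁ P₂ (e i) = U i := by
  classical
  haveI h3 : Finite (Projectivization F (Fin 3 → F)) := Quotient.finite _
  haveI h2 : Finite (Projectivization F (Fin 2 → F)) := Quotient.finite _
  letI : Fintype (Projectivization F (Fin 3 → F)) := Fintype.ofFinite _
  letI : Fintype (Projectivization F (Fin 2 → F)) := Fintype.ofFinite _
  have hcard : Fintype.card (Projectivization F (Fin 2 → F)) = Fintype.card F + 1 := by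
    rw [← Nat.card_eq_fintype_card, aux_cardP1]
  let e : Fin (Fintype.card F + 1) ≃ Projectivization F (Fin 2 → F) :=
    Fintype.equivOfCardEq (by rw [Fintype.card_fin, hcard])
  -- separating linear forms
  have sep : ∀ Q Q' : Projectivization F (Fin 3 → F), Q ≠ Q' →
      ∃ a : Fin 3 → F, (∑ i, a i * Q'.rep i = 0) ∧ (∑ i, a i * Q.rep i ≠ 0) := by
    intro Q Q' hne
    apply aux_dual_sep
    rintro ⟨c, hc⟩
    apply hne
    have hmk := (Projectivization.mk_eq_mk_iff' F Q.rep Q'.rep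
      Q.rep_nonzero Q'.rep_nonzero).2 ⟨c, hc⟩
    rwa [Projectivization.mk_rep, Projectivization.mk_rep] at hmk
  choose a ha0 ha1 using sep
  let aa : Projectivization F (Fin 3 → F) → Projectivization F (Fin 3 → F) → Fin 3 → F :=
    fun Q Q' => if h : Q = Q' then 0 else a Q Q' h
  let χ : Projectivization F (Fin 3 → F) → MvPolynomial (Fin 3) F := fun Q =>
    ∏ Q' ∈ Finset.univ.erase Q, (∑ i, C (aa Q Q' i) * X i)
  set d := Fintype.card (Projectivization F (Fin 3 → F)) - 1 with hd
  have hχhom : ∀ Q, (χ Q).IsHomogeneous d := by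
    intro Q
    have hp := MvPolynomial.IsHomogeneous.prod (Finset.univ.erase Q)
      (fun Q' => ∑ i, C (aa Q Q' i) * X i) (fun _ => 1) (fun Q' _ => by
        apply MvPolynomial.IsHomogeneous.sum
        intro i _
        simpa using (isHomogeneous_C (Fin 3) (aa Q Q' i)).mul (isHomogeneous_X F i))
    simpa [Finset.sum_const, Finset.card_erase_of_mem, Finset.card_univ, hd] using hp
  have hvalz : ∀ Q Q', Q' ≠ Q → eval Q'.rep (χ Q) = 0 := by
    intro Q Q' hne
    have hmem : Q' ∈ Finset.univ.erase Q := Finset.mem_erase.2 ⟨hne, Finset.mem_univ _⟩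
    simp only [χ, map_prod]
    apply Finset.prod_eq_zero hmem
    simp only [map_sum, map_mul, eval_C, eval_X, aa, dif_neg (Ne.symm hne)]
    exact ha0 Q Q' (Ne.symm hne)
  have hvalnz : ∀ Q, eval Q.rep (χ Q) ≠ 0 := by
    intro Q
    simp only [χ, map_prod]
    rw [Finset.prod_ne_zero_iff]
    intro Q' hmem
    obtain ⟨hne, -⟩ := Finset.mem_erase.1 hmem
    simp only [map_sum, map_mul, eval_C, eval_X, aa, dif_neg (Ne.symm hne)]
    exact ha1 Q Q' (Ne.symm hne)
  set B := ⋂ k, U k with hB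
  have hBsub : ∀ i, B ⊆ U i := fun i => Set.iInter_subset U i
  have hUidx : ∀ Q, ∃ i, Q ∈ U i := by
    intro Q
    have hQ : Q ∈ ⋃ i, U i := hcover ▸ Set.mem_univ Q
    exact Set.mem_iUnion.1 hQ
  choose idx hidx using hUidx
  let cs : Projectivization F (Fin 3 → F) → F := fun Q => if Q ∈ B then 0 else (e (idx Q)).rep 1
  let ct : Projectivization F (Fin 3 → F) → F := fun Q => if Q ∈ B then 0 else -((e (idx Q)).rep 0)
  have hevalP : ∀ (c : Projectivization F (Fin 3 → F) → F) (Q),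
      eval Q.rep (∑ Q', C (c Q') * χ Q') = c Q * eval Q.rep (χ Q) := by
    intro c Q
    rw [map_sum, Finset.sum_eq_single Q]
    · rw [map_mul, eval_C]
    · intro Q' _ hne
      rw [map_mul, eval_C, hvalz Q' Q (Ne.symm hne), mul_zero]
    · intro h; exact absurd (Finset.mem_univ Q) h
  refine ⟨d, ∑ Q, C (cs Q) * χ Q, ∑ Q, C (ct Q) * χ Q, e, ?_, ?_, ?_⟩
  · exact MvPolynomial.IsHomogeneous.sum _ _ _ fun Q _ => by
      simpa using (isHomogeneous_C (Fin 3) (cs Q)).mul (hχhom Q)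
  · exact MvPolynomial.IsHomogeneous.sum _ _ _ fun Q _ => by
      simpa using (isHomogeneous_C (Fin 3) (ct Q)).mul (hχhom Q)
  · intro i
    ext Q
    simp only [pencilMember, Set.mem_setOf_eq]
    rw [hevalP cs Q, hevalP ct Q]
    have hkey : (e i).rep 0 * (cs Q * eval Q.rep (χ Q))
        + (e i).rep 1 * (ct Q * eval Q.rep (χ Q))
        = ((e i).rep 0 * cs Q + (e i).rep 1 * ct Q) * eval Q.rep (χ Q) := by ring
    rw [hkey, mul_eq_zero, or_iff_left (hvalnz Q)]
    by_cases hQB : Q ∈ B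
    · refine iff_of_true ?_ (hBsub i hQB)
      simp [cs, ct, hQB]
    · simp only [cs, ct, if_neg hQB]
      have hdet : (e i).rep 0 * (e (idx Q)).rep 1 + (e i).rep 1 * -((e (idx Q)).rep 0)
          = (e i).rep 0 * (e (idx Q)).rep 1 - (e i).rep 1 * (e (idx Q)).rep 0 := by ring
      rw [hdet, aux_det, Equiv.apply_eq_iff_eq]
      constructor
      · rintro rfl; exact hidx Q
      · intro hU
        by_contra hij
        have hmem : Q ∈ U i ∩ U (idx Q) := ⟨hU, hidx Q⟩
        rw [hinter i (idx Q) hij] at hmem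
        exact hQB hmem
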